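/- In the group Γ₀' = (⊕_{i∈ℤ} ℤ) × (⊕_{i>0} ℤ) with product ((aᵢ),(bᵢ))·((cᵢ),(dᵢ)) = ((aᵢ+cᵢ), (bᵢ+dᵢ+Σ_{l−k=i} a_l c_k)), let eⱼ denote the element whose first coordinate is the standard basis vector at position j and whose second coordinate is zero. Then for all i, j ∈ ℤ with j > i, the commutator [eᵢ, eⱼ] = eᵢ⁻¹ eⱼ⁻¹ eᵢ eⱼ equals the element whose first coordinate is zero and whose second coordinate is the negative standard basis vector at position j − i; in particular [eᵢ, eⱼ] depends only on j − i, and [eᵢ, eⱼ] = [eⱼ, eᵢ]⁻¹. -/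
import Mathlib


/-- Positive integers, the index set for the second coordinate. -/
abbrev PosZ : Type := {i : ℤ // 0 < i}

/-- The carrier `Γ₀' = (⊕_{i∈ℤ} ℤ) × (⊕_{i>0} ℤ)` of finitely supported sequences. -/
abbrev Gamma0' : Type := (ℤ →₀ ℤ) × (PosZ →₀ ℤ)

/-- The cross term `(Σ_{l−k=i} a_l c_k)_{i>0}`, as a finitely supported sequence. -/
noncomputable def cross (a c : ℤ →₀ ℤ) : PosZ →₀ ℤ :=
  Finsupp.onFinset
    (((a.support ×ˢ c.support).image fun p => p.1 - p.2).subtype fun i => 0 < i)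
    (fun i => ∑ l ∈ a.support, a l * c (l - i.val))
    (by
      intro i hi
      rw [Finset.mem_subtype]
      obtain ⟨l, hl, hne⟩ := Finset.exists_ne_zero_of_sum_ne_zero hi
      have hc : c (l - i.val) ≠ 0 := fun h => hne (by simp [h])
      exact Finset.mem_image.2 ⟨(l, l - i.val),
        Finset.mem_product.2 ⟨hl, Finsupp.mem_support_iff.2 hc⟩, by ring⟩)

/-- The operation `((aᵢ),(bᵢ)) · ((cᵢ),(dᵢ)) = ((aᵢ+cᵢ), (bᵢ+dᵢ+Σ_{l−k=i} a_l c_k))`. -/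
noncomputable def gmul (x y : Gamma0') : Gamma0' := (x.1 + y.1, x.2 + y.2 + cross x.1 y.1)

/-- The identity element `(0,0)`. -/
noncomputable def gone : Gamma0' := (0, 0)

/-- The proposed inverse `((aᵢ),(bᵢ))⁻¹ = ((−aᵢ), (Σ_{l−k=i} a_l a_k − bᵢ))`. -/
noncomputable def ginv (x : Gamma0') : Gamma0' := (-x.1, cross x.1 x.1 - x.2)


/-- The generator `eⱼ`: standard basis vector at position `j` in the first
coordinate, zero in the second. -/
noncomputable def egen (j : ℤ) : Gamma0' := (Finsupp.single j 1, 0)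

/-- The commutator `[x,y] = x⁻¹y⁻¹xy` in `Γ₀'`. -/
noncomputable def gcomm (x y : Gamma0') : Gamma0' :=
  gmul (gmul (gmul (ginv x) (ginv y)) x) y



lemma crossApp (a c : ℤ →₀ ℤ) (p : PosZ) :
    cross a c p = a.sum fun l al => al * c (l - p.val) := rfl

lemma cross_zero_left (c : ℤ →₀ ℤ) : cross 0 c = 0 := by
  ext p; rw [crossApp]; simp

lemma cross_add_left (a b c : ℤ →₀ ℤ) : cross (a + b) c = cross a c + cross b c := by
  ext p
  rw [Finsupp.add_apply, crossApp, crossApp, crossApp]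
  exact Finsupp.sum_add_index' (fun l => zero_mul _) (fun l x y => add_mul x y _)

lemma cross_neg_left (a c : ℤ →₀ ℤ) : cross (-a) c = -(cross a c) := by
  have h := cross_add_left (-a) a c
  rw [neg_add_cancel, cross_zero_left] at h
  exact eq_neg_of_add_eq_zero_left h.symm

lemma cross_add_right (a c d : ℤ →₀ ℤ) : cross a (c + d) = cross a c + cross a d := by
  ext p
  simp only [crossApp, Finsupp.add_apply, mul_add]
  exact Finsupp.sum_add

lemma cross_zero_right (a : ℤ →₀ ℤ) : cross a 0 = 0 := by
  ext p; rw [crossApp]; simp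

lemma cross_neg_right (a c : ℤ →₀ ℤ) : cross a (-c) = -(cross a c) := by
  have h := cross_add_right a (-c) c
  rw [neg_add_cancel, cross_zero_right] at h
  exact eq_neg_of_add_eq_zero_left h.symm

lemma cross_single_apply (l k : ℤ) (p : PosZ) :
    cross (Finsupp.single l 1) (Finsupp.single k 1) p =
      if l - k = p.val then 1 else 0 := by
  rw [crossApp, Finsupp.sum_single_index (by simp), Finsupp.single_apply]
  split_ifs with h1 h2 h2 <;> first | rfl | omega

lemma cross_single_zero (l k : ℤ) (h : l ≤ k) :
    cross (Finsupp.single l 1) (Finsupp.single k 1) = 0 := by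
  ext p
  rw [cross_single_apply]
  have := p.2
  simp only [Finsupp.coe_zero, Pi.zero_apply]
  split_ifs with hh
  · omega
  · rfl

lemma cross_single_pos (l k : ℤ) (h : k < l) :
    cross (Finsupp.single l 1) (Finsupp.single k 1) =
      Finsupp.single (⟨l - k, by omega⟩ : PosZ) 1 := by
  ext p
  rw [cross_single_apply, Finsupp.single_apply]
  split_ifs with h1 h2 h2 <;>
    first | rfl |
      (exfalso; first | exact h2 (Subtype.ext h1) | exact h1 (congrArg Subtype.val h2))

/-- for `j > i`, the commutator `[eᵢ,eⱼ]` is the element with first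
coordinate zero and second coordinate the negative standard basis vector at
position `j − i`; in particular it depends only on `j − i`, and
`[eᵢ,eⱼ] = [eⱼ,eᵢ]⁻¹`. -/
theorem stmt_11 (i j : ℤ) (hij : i < j) :
    gcomm (egen i) (egen j) =
      ((0 : ℤ →₀ ℤ), -(Finsupp.single (⟨j - i, by omega⟩ : PosZ) (1 : ℤ))) ∧
    gcomm (egen i) (egen j) = ginv (gcomm (egen j) (egen i)) := by
  have h1 : gcomm (egen i) (egen j) =
      ((0 : ℤ →₀ ℤ), -(Finsupp.single (⟨j - i, by omega⟩ : PosZ) (1 : ℤ))) := by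
    simp only [gcomm, gmul, ginv, egen]
    refine Prod.ext ?_ ?_
    · show -Finsupp.single i 1 + -Finsupp.single j 1 + Finsupp.single i 1 + Finsupp.single j 1 = _
      abel
    · show cross (Finsupp.single i 1) (Finsupp.single i 1) - 0 +
          (cross (Finsupp.single j 1) (Finsupp.single j 1) - 0) +
          cross (-Finsupp.single i 1) (-Finsupp.single j 1) + 0 +
          cross (-Finsupp.single i 1 + -Finsupp.single j 1) (Finsupp.single i 1) + 0 +
          cross (-Finsupp.single i 1 + -Finsupp.single j 1 + Finsupp.single i 1) (Finsupp.single j 1) = _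
      rw [cross_add_left, cross_add_left, cross_add_left]
      simp only [cross_neg_left, cross_neg_right,
        cross_single_zero i i le_rfl, cross_single_zero i j hij.le,
        cross_single_zero j j le_rfl, cross_single_pos j i hij]
      abel
  have h2 : gcomm (egen j) (egen i) =
      ((0 : ℤ →₀ ℤ), (Finsupp.single (⟨j - i, by omega⟩ : PosZ) (1 : ℤ))) := by
    simp only [gcomm, gmul, ginv, egen]
    refine Prod.ext ?_ ?_
    · show -Finsupp.single j 1 + -Finsupp.single i 1 + Finsupp.single j 1 + Finsupp.single i 1 = _
      abel
    · show cross (Finsupp.single j 1) (Finsupp.single j 1) - 0 +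
          (cross (Finsupp.single i 1) (Finsupp.single i 1) - 0) +
          cross (-Finsupp.single j 1) (-Finsupp.single i 1) + 0 +
          cross (-Finsupp.single j 1 + -Finsupp.single i 1) (Finsupp.single j 1) + 0 +
          cross (-Finsupp.single j 1 + -Finsupp.single i 1 + Finsupp.single j 1) (Finsupp.single i 1) = _
      rw [cross_add_left, cross_add_left, cross_add_left]
      simp only [cross_neg_left, cross_neg_right,
        cross_single_zero i i le_rfl, cross_single_zero i j hij.le,
        cross_single_zero j j le_rfl, cross_single_pos j i hij]
      abel
  refine ⟨h1, ?_⟩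
  rw [h1, h2, ginv]
  refine Prod.ext (by simp) ?_
  show -_ = cross (0 : ℤ →₀ ℤ) 0 - _
  rw [cross_zero_left]
  abel
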